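/- arXiv:2511.18527 — 3 statements merged into one kernel-verified Lean document; each statement's English description precedes it below -/
import Mathlib

section
/- A topological space X is T0 if and only if for every point x, the derived set of {x} is a union of closed sets (equivalently, for every y in the derived set of {x}, closure {y} is contained in the derived set of {x}). -/
/-- `X` is T0 iff for every `x`, the derived set of `{x}` (i.e. `closure {x} \ {x}`)
is a union of closed sets: every `y` in it has `closure {y}` contained in it. -/
theorem stmt_3 {X : Type*} [TopologicalSpace X] :
    T0Space X ↔
      ∀ x : X, ∀ y ∈ closure ({x} : Set X) \ {x},
        closure ({y} : Set X) ⊆ closure ({x} : Set X) \ {x} := by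
  constructor
  · intro h x y ⟨hyc, hyx⟩ z hz
    rw [← specializes_iff_mem_closure] at hz hyc
    refine ⟨(hyc.trans hz).mem_closure, ?_⟩
    intro hzx
    rw [Set.mem_singleton_iff] at hzx
    subst hzx
    exact hyx (Set.mem_singleton_iff.2 ((hz.antisymm hyc).eq))
  · intro h
    refine ⟨fun x y hxy => ?_⟩
    by_contra hne
    have hy : y ∈ closure ({x} : Set X) \ {x} := by
      refine ⟨hxy.specializes.mem_closure, ?_⟩
      simp [Ne.symm hne]
    exact (h x y hy hxy.specializes'.mem_closure).2 rfl
end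

section
/- A topological space X is TD (every singleton is locally closed) if and only if for every subset A of X, the derived set A' of A is closed. -/
/-- `X` is TD (every singleton is locally closed) iff the derived set of every
subset is closed. -/
theorem stmt_16 {X : Type*} [TopologicalSpace X] :
    (∀ x : X, ∃ U F : Set X, IsOpen U ∧ IsClosed F ∧ ({x} : Set X) = U ∩ F) ↔
      ∀ A : Set X, IsClosed {x : X | x ∈ closure (A \ {x})} := by
  constructor
  · intro h A
    rw [← isOpen_compl_iff, isOpen_iff_forall_mem_open]
    intro x hx
    simp only [Set.mem_compl_iff, Set.mem_setOf_eq] at hx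
    obtain ⟨U, F, hU, hF, hUF⟩ := h x
    have hxU : x ∈ U := by
      have : x ∈ ({x} : Set X) := rfl
      rw [hUF] at this; exact this.1
    have hxF : x ∈ F := by
      have : x ∈ ({x} : Set X) := rfl
      rw [hUF] at this; exact this.2
    refine ⟨(closure (A \ {x}))ᶜ ∩ U, ?_, isClosed_closure.isOpen_compl.inter hU, hx, hxU⟩
    · intro y hy
      simp only [Set.mem_compl_iff, Set.mem_setOf_eq]
      intro hyD
      by_cases hyx : y = x
      · exact hx (hyx ▸ hyD)
      · have hyF : y ∉ F := by
          intro hyF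
          have : y ∈ U ∩ F := ⟨hy.2, hyF⟩
          rw [← hUF] at this
          exact hyx this
        have hO : IsOpen ((closure (A \ {x}))ᶜ ∩ U ∩ Fᶜ) :=
          ((isClosed_closure.isOpen_compl.inter hU).inter hF.isOpen_compl)
        have hyO : y ∈ (closure (A \ {x}))ᶜ ∩ U ∩ Fᶜ := ⟨hy, hyF⟩
        obtain ⟨z, hz1, hz2⟩ := (mem_closure_iff.mp hyD) _ hO hyO
        have hzx : z = x := by
          by_contra hzx
          exact hz1.1.1 (subset_closure ⟨hz2.1, hzx⟩)
        exact hz1.2 (hzx ▸ hxF)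
  · intro h x
    refine ⟨{y : X | y ∈ closure (({x} : Set X) \ {y})}ᶜ, closure {x},
      (h {x}).isOpen_compl, isClosed_closure, ?_⟩
    ext y
    simp only [Set.mem_inter_iff, Set.mem_compl_iff, Set.mem_setOf_eq,
      Set.mem_singleton_iff]
    constructor
    · rintro rfl
      refine ⟨?_, subset_closure rfl⟩
      simp
    · rintro ⟨hyD, hyc⟩
      by_contra hyx
      apply hyD
      have : ({x} : Set X) \ {y} = {x} := by
        ext z
        simp only [Set.mem_diff, Set.mem_singleton_iff]
        constructor
        · exact fun h => h.1
        · rintro rfl; exact ⟨rfl, fun h => hyx h.symm⟩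
      rw [this]
      exact hyc
end

section
/- If (X_α)_{α ∈ A} is an infinite family of topological spaces none of which is T1, then the product space Π X_α with the product topology is not TD: it contains a point whose singleton is not locally closed. -/
/-- An infinite product of non-T1 spaces is not TD: some point has a singleton
that is not locally closed. -/
theorem stmt_17 {ι : Type*} [Infinite ι] (X : ι → Type*)
    [∀ i, TopologicalSpace (X i)] (h : ∀ i, ¬ T1Space (X i)) :
    ∃ x : (∀ i, X i),
      ¬ ∃ U F : Set (∀ i, X i), IsOpen U ∧ IsClosed F ∧ ({x} : Set (∀ i, X i)) = U ∩ F := by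
  -- for each i pick x i with {x i} not closed, hence some y i ≠ x i in its closure
  have key : ∀ i, ∃ x : X i, ∃ y : X i, y ≠ x ∧ y ∈ closure {x} := by
    intro i
    have h' : ¬ ∀ x : X i, IsClosed ({x} : Set (X i)) := fun hc => h i ⟨hc⟩
    push_neg at h'
    obtain ⟨x, hx⟩ := h'
    refine ⟨x, ?_⟩
    by_contra hy
    push_neg at hy
    apply hx
    have : closure ({x} : Set (X i)) = {x} := by
      apply Set.Subset.antisymm
      · intro y hyc
        by_contra hne
        exact hy y (by simpa using hne) hyc
      · exact subset_closure
    rw [← this]; exact isClosed_closure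
  classical
  choose x y hy hyc using key
  refine ⟨x, ?_⟩
  rintro ⟨U, F, hU, hF, hUF⟩
  have hxU : x ∈ U := ((hUF ▸ rfl : x ∈ U ∩ F)).1
  obtain ⟨I, u, hu, hpi⟩ := (isOpen_pi_iff.mp hU) x hxU
  obtain ⟨j, hj⟩ := I.exists_notMem
  set z := Function.update x j (y j) with hz
  have hzU : z ∈ U := by
    apply hpi
    intro i hi
    have hij : i ≠ j := fun e => hj (e ▸ hi)
    simp only [hz, Function.update_of_ne hij]
    exact (hu i hi).2
  have hzF : z ∈ F := by
    have hcl : z ∈ closure ({x} : Set (∀ i, X i)) := by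
      have : ({x} : Set (∀ i, X i)) = Set.pi Set.univ fun i => ({x i} : Set (X i)) := by
        ext w; simp [funext_iff, Set.mem_pi]
      rw [this, closure_pi_set]
      intro i _
      rcases eq_or_ne i j with rfl | hij
      · simpa [hz] using hyc i
      · simpa [hz, Function.update_of_ne hij] using subset_closure (Set.mem_singleton (x i))
    have hxF : ({x} : Set (∀ i, X i)) ⊆ F := by rw [hUF]; exact Set.inter_subset_right
    exact hF.closure_subset_iff.mpr hxF hcl
  have : z = x := by
    have : z ∈ ({x} : Set (∀ i, X i)) := hUF ▸ ⟨hzU, hzF⟩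
    simpa using this
  exact hy j (by simpa [hz] using congrFun this j)
end
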